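/- Assume Σ_D = {(A,B) : X_+ = A X_- + B U_-} is nonempty. There exists K ∈ ℝ^{m×n} such that A + B K is Schur stable for all (A,B) ∈ Σ_D if and only if X_- has full row rank n and there exists a right inverse X_-^♯ of X_- such that X_+ X_-^♯ is Schur stable. Moreover in this case K = U_- X_-^♯ for such a right inverse, and A + B K = X_+ X_-^♯ for all (A,B) ∈ Σ_D. -/

import Mathlib

/-- A real square matrix is Schur stable if all its complex eigenvalues have modulus
strictly less than one. -/
def SchurStable {n : ℕ} (M : Matrix (Fin n) (Fin n) ℝ) : Prop :=
  ∀ z ∈ spectrum ℂ (M.map Complex.ofReal), ‖z‖ < 1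

open Matrix Polynomial

lemma root_mem_spectrum {k : ℕ} (M : Matrix (Fin k) (Fin k) ℂ) (z : ℂ)
    (hz : M.charpoly.IsRoot z) : z ∈ spectrum ℂ M := by
  rw [spectrum.mem_iff]
  have hdet : (algebraMap ℂ (Matrix (Fin k) (Fin k) ℂ) z - M).det = M.charpoly.eval z := by
    rw [Matrix.charpoly, ← Polynomial.coe_evalRingHom, RingHom.map_det]
    congr 1
    ext i j
    by_cases h : i = j
    · subst h
      simp [charmatrix_apply_eq, algebraMap_matrix_apply]
    · simp [charmatrix_apply_ne _ _ _ h, algebraMap_matrix_apply, h]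
  intro hu
  rw [Matrix.isUnit_iff_isUnit_det, hdet, hz.eq_zero] at hu
  exact (not_isUnit_zero : ¬ IsUnit (0 : ℂ)) hu

lemma trace_bound {k : ℕ} (M : Matrix (Fin k) (Fin k) ℝ) (h : SchurStable M) :
    |M.trace| ≤ (k : ℝ) := by
  set Mc := M.map Complex.ofReal with hMc
  have htr : Mc.trace = (M.trace : ℂ) := by
    simp [Matrix.trace, Mc, Matrix.diag]
  have h1 : ‖Mc.trace‖ ≤ (Mc.charpoly.roots.map (fun z => ‖z‖)).sum := by
    rw [Matrix.trace_eq_sum_roots_charpoly]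
    exact norm_multiset_sum_le _
  have h2 : (Mc.charpoly.roots.map (fun z => ‖z‖)).sum ≤
      (Mc.charpoly.roots.map (fun z => ‖z‖)).card • (1 : ℝ) := by
    apply Multiset.sum_le_card_nsmul
    intro x hx
    obtain ⟨z, hz, rfl⟩ := Multiset.mem_map.mp hx
    exact le_of_lt (h z (root_mem_spectrum Mc z (isRoot_of_mem_roots hz)))
  have h3 : (Mc.charpoly.roots.map (fun z => ‖z‖)).card ≤ k := by
    rw [Multiset.card_map]
    calc Mc.charpoly.roots.card ≤ Mc.charpoly.natDegree := Polynomial.card_roots' _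
    _ = k := by simp [Matrix.charpoly_natDegree_eq_dim]
  calc |M.trace| = ‖Mc.trace‖ := by rw [htr, Complex.norm_real]; rfl
  _ ≤ (Mc.charpoly.roots.map (fun z => ‖z‖)).card • (1:ℝ) := h1.trans h2
  _ ≤ (k : ℝ) • 1 := by
      simp only [nsmul_eq_mul, mul_one, smul_eq_mul]
      exact_mod_cast h3
  _ = k := by simp

lemma exists_mulVec_eq {ι τ : Type*} [Fintype ι] [Fintype τ] [DecidableEq ι]
    (S : Matrix ι τ ℝ) (c : ι → ℝ)
    (h : ∀ w : ι → ℝ, w ᵥ* S = 0 → w ⬝ᵥ c = 0) :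
    ∃ x : τ → ℝ, S *ᵥ x = c := by
  classical
  let e : (ι → ℝ) ≃ₗ[ℝ] EuclideanSpace ℝ ι := (WithLp.linearEquiv 2 ℝ (ι → ℝ)).symm
  let U : Submodule ℝ (EuclideanSpace ℝ ι) := (LinearMap.range S.mulVecLin).map e.toLinearMap
  have hinner : ∀ (a : ι → ℝ) (b : EuclideanSpace ℝ ι), (inner ℝ (e a) b : ℝ) = a ⬝ᵥ e.symm b := by
    intro a b
    rw [PiLp.inner_apply]
    simp [dotProduct, e, mul_comm]
  have hinner' : ∀ (b : EuclideanSpace ℝ ι) (a : ι → ℝ), (inner ℝ b (e a) : ℝ) = e.symm b ⬝ᵥ a := by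
    intro b a
    rw [PiLp.inner_apply]
    simp [dotProduct, e, mul_comm]
  have hc : e c ∈ U := by
    rw [← Submodule.orthogonal_orthogonal U]
    intro w hw
    have hwS : e.symm w ᵥ* S = 0 := by
      have hall : ∀ x : τ → ℝ, (e.symm w ᵥ* S) ⬝ᵥ x = 0 := by
        intro x
        have := hw (e (S *ᵥ x)) ⟨S *ᵥ x, ⟨x, rfl⟩, rfl⟩
        rwa [hinner, dotProduct_comm, dotProduct_mulVec] at this
      have := hall (e.symm w ᵥ* S)
      rwa [dotProduct_self_eq_zero] at this
    rw [hinner']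
    exact h (e.symm w) hwS
  obtain ⟨d, ⟨x, hx⟩, hd⟩ := hc
  exact ⟨x, by rw [show S.mulVecLin x = S *ᵥ x from rfl] at hx; rw [hx, e.injective hd]⟩

lemma vecMulVec_mul_right {k l r : ℕ} (v : Fin k → ℝ) (a : Fin l → ℝ)
    (M : Matrix (Fin l) (Fin r) ℝ) :
    vecMulVec v a * M = vecMulVec v (a ᵥ* M) := by
  ext i j
  simp [mul_apply, vecMulVec_apply, vecMul, dotProduct, Finset.mul_sum, mul_assoc]

lemma key {n m T : ℕ}
    (Xm Xp : Matrix (Fin n) (Fin T) ℝ) (Um : Matrix (Fin m) (Fin T) ℝ)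
    (A0 : Matrix (Fin n) (Fin n) ℝ) (B0 : Matrix (Fin n) (Fin m) ℝ)
    (h0 : Xp = A0 * Xm + B0 * Um)
    (K : Matrix (Fin m) (Fin n) ℝ)
    (hK : ∀ (A : Matrix (Fin n) (Fin n) ℝ) (B : Matrix (Fin n) (Fin m) ℝ),
          Xp = A * Xm + B * Um → SchurStable (A + B * K)) :
    ∃ Xs : Matrix (Fin T) (Fin n) ℝ,
      Xm * Xs = 1 ∧ SchurStable (Xp * Xs) ∧ K = Um * Xs ∧
      (∀ (A : Matrix (Fin n) (Fin n) ℝ) (B : Matrix (Fin n) (Fin m) ℝ),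
        Xp = A * Xm + B * Um → A + B * K = Xp * Xs) := by
  classical
  -- Step 1: left-kernel annihilation
  have hker : ∀ (a : Fin n → ℝ) (b : Fin m → ℝ),
      a ᵥ* Xm + b ᵥ* Um = 0 → a + b ᵥ* K = 0 := by
    intro a b hab
    set v := a + b ᵥ* K with hv
    set s := ∑ i, v i * v i with hs
    have hs0 : s = 0 := by
      by_contra hsne
      have hsnn : 0 ≤ s := Finset.sum_nonneg fun i _ => mul_self_nonneg _
      have hspos : 0 < s := lt_of_le_of_ne hsnn (Ne.symm hsne)
      set N := A0 + B0 * K with hN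
      have hstab : ∀ t : ℝ, SchurStable (N + t • vecMulVec v v) := by
        intro t
        have hcons : Xp = (A0 + t • vecMulVec v a) * Xm + (B0 + t • vecMulVec v b) * Um := by
          rw [Matrix.add_mul, Matrix.add_mul, Matrix.smul_mul, Matrix.smul_mul,
            vecMulVec_mul_right, vecMulVec_mul_right]
          have : vecMulVec v (a ᵥ* Xm) + vecMulVec v (b ᵥ* Um) = 0 := by
            ext i j
            have := congrFun hab j
            simp only [Pi.add_apply, Pi.zero_apply] at this
            simp [vecMulVec_apply, ← mul_add, this]
          rw [h0]
          abel_nf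
          rw [show t • vecMulVec v (a ᵥ* Xm) + t • vecMulVec v (b ᵥ* Um)
              = t • (vecMulVec v (a ᵥ* Xm) + vecMulVec v (b ᵥ* Um)) from (smul_add t _ _).symm,
            this, smul_zero, add_zero]
        have := hK _ _ hcons
        have hcl : (A0 + t • vecMulVec v a) + (B0 + t • vecMulVec v b) * K
            = N + t • vecMulVec v v := by
          rw [Matrix.add_mul, Matrix.smul_mul, vecMulVec_mul_right, hN]
          have : vecMulVec v a + vecMulVec v (b ᵥ* K) = vecMulVec v v := by
            ext i j
            simp [vecMulVec_apply, hv, mul_add]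
          rw [show A0 + t • vecMulVec v a + (B0 * K + t • vecMulVec v (b ᵥ* K))
              = A0 + B0 * K + (t • vecMulVec v a + t • vecMulVec v (b ᵥ* K)) by abel,
            ← smul_add, this]
        rwa [hcl] at this
      have htrP : (vecMulVec v v).trace = s := by
        simp [Matrix.trace, Matrix.diag, vecMulVec_apply, hs]
      have hbdd : ∀ t : ℝ, |N.trace + t * s| ≤ (n : ℝ) := by
        intro t
        have := trace_bound _ (hstab t)
        rwa [Matrix.trace_add, Matrix.trace_smul, htrP, smul_eq_mul] at this
      have := hbdd ((n + 1 + |N.trace|) / s)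
      rw [div_mul_cancel₀ _ (ne_of_gt hspos)] at this
      have habs : (n : ℝ) + 1 ≤ |N.trace + (n + 1 + |N.trace|)| := by
        have h1 : N.trace + (↑n + 1 + |N.trace|) ≥ n + 1 := by
          nlinarith [abs_nonneg N.trace, neg_abs_le N.trace]
        calc (n:ℝ) + 1 ≤ N.trace + (↑n + 1 + |N.trace|) := h1
        _ ≤ |N.trace + (↑n + 1 + |N.trace|)| := le_abs_self _
      linarith
    have hvz : ∀ i, v i = 0 := by
      intro i
      have hsum : ∑ i, v i * v i = 0 := hs ▸ hs0
      have := (Finset.sum_eq_zero_iff_of_nonneg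
        (fun i _ => mul_self_nonneg (v i))).mp hsum i (Finset.mem_univ i)
      exact mul_self_eq_zero.mp this
    exact funext hvz
  -- Step 2: build the common right inverse
  have hcol : ∀ j : Fin n, ∃ x : Fin T → ℝ,
      Matrix.fromRows Xm Um *ᵥ x = fun i => Matrix.fromRows (1 : Matrix (Fin n) (Fin n) ℝ) K i j := by
    intro j
    apply exists_mulVec_eq
    intro w hw
    have hwe : w = Sum.elim (w ∘ Sum.inl) (w ∘ Sum.inr) := by
      funext i; cases i <;> rfl
    have hab : (w ∘ Sum.inl) ᵥ* Xm + (w ∘ Sum.inr) ᵥ* Um = 0 := by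
      rw [← sumElim_vecMul_fromRows, ← hwe]
      exact hw
    have hzero := hker _ _ hab
    have hj := congrFun hzero j
    simp only [Pi.add_apply, Pi.zero_apply] at hj
    have hdp : w ⬝ᵥ (fun i => Matrix.fromRows (1 : Matrix (Fin n) (Fin n) ℝ) K i j)
        = (w ∘ Sum.inl) j + ((w ∘ Sum.inr) ᵥ* K) j := by
      simp [dotProduct, Fintype.sum_sum_type, Matrix.vecMul, Matrix.one_apply,
        Finset.sum_ite_eq', mul_comm]
    rw [hdp, hj]
  choose x hx using hcol
  set Xs : Matrix (Fin T) (Fin n) ℝ := Matrix.of (fun t j => x j t) with hXs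
  have hmulXs : ∀ (l : ℕ) (M : Matrix (Fin l) (Fin T) ℝ) (i : Fin l) (j : Fin n),
      (M * Xs) i j = (M *ᵥ x j) i := by
    intro l M i j
    simp [Matrix.mul_apply, Matrix.mulVec, dotProduct, hXs]
  have hXm : Xm * Xs = 1 := by
    ext i j
    have := congrFun (hx j) (Sum.inl i)
    rw [fromRows_mulVec] at this
    simpa [hmulXs] using this
  have hUm : Um * Xs = K := by
    ext i j
    have := congrFun (hx j) (Sum.inr i)
    rw [fromRows_mulVec] at this
    simpa [hmulXs] using this
  have hcl : ∀ (A : Matrix (Fin n) (Fin n) ℝ) (B : Matrix (Fin n) (Fin m) ℝ),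
      Xp = A * Xm + B * Um → A + B * K = Xp * Xs := by
    intro A B hAB
    rw [hAB, Matrix.add_mul, Matrix.mul_assoc, Matrix.mul_assoc, hXm, Matrix.mul_one, hUm]
  refine ⟨Xs, hXm, ?_, hUm.symm, hcl⟩
  rw [← hcl A0 B0 h0]
  exact hK A0 B0 h0

/-- Conditions for data-driven stabilization by state feedback: the data are
informative for stabilization iff X₋ has full row rank and some right inverse X₋♯
makes X₊X₋♯ Schur stable; moreover the stabilizing gains are exactly K = U₋X₋♯ for
such right inverses, and then A + BK = X₊X₋♯ for all consistent (A,B). -/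
theorem informativity_for_stabilization
    (n m T : ℕ)
    (Xm Xp : Matrix (Fin n) (Fin T) ℝ) (Um : Matrix (Fin m) (Fin T) ℝ)
    (hne : ∃ (A : Matrix (Fin n) (Fin n) ℝ) (B : Matrix (Fin n) (Fin m) ℝ),
      Xp = A * Xm + B * Um) :
    ((∃ K : Matrix (Fin m) (Fin n) ℝ,
        ∀ (A : Matrix (Fin n) (Fin n) ℝ) (B : Matrix (Fin n) (Fin m) ℝ),
          Xp = A * Xm + B * Um → SchurStable (A + B * K))
      ↔ (Xm.rank = n ∧ ∃ Xs : Matrix (Fin T) (Fin n) ℝ,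
          Xm * Xs = 1 ∧ SchurStable (Xp * Xs)))
    ∧ (∀ K : Matrix (Fin m) (Fin n) ℝ,
        (∀ (A : Matrix (Fin n) (Fin n) ℝ) (B : Matrix (Fin n) (Fin m) ℝ),
          Xp = A * Xm + B * Um → SchurStable (A + B * K))
        ↔ ∃ Xs : Matrix (Fin T) (Fin n) ℝ,
            Xm * Xs = 1 ∧ SchurStable (Xp * Xs) ∧ K = Um * Xs ∧
            (∀ (A : Matrix (Fin n) (Fin n) ℝ) (B : Matrix (Fin n) (Fin m) ℝ),
              Xp = A * Xm + B * Um → A + B * K = Xp * Xs)) := by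
  obtain ⟨A0, B0, h0⟩ := hne
  constructor
  · constructor
    · rintro ⟨K, hK⟩
      obtain ⟨Xs, hXm, hstab, -, -⟩ := key Xm Xp Um A0 B0 h0 K hK
      refine ⟨?_, Xs, hXm, hstab⟩
      apply le_antisymm
      · exact (Xm.rank_le_card_height).trans (Fintype.card_fin n).le
      · calc n = (1 : Matrix (Fin n) (Fin n) ℝ).rank := by
              rw [Matrix.rank_one, Fintype.card_fin]
        _ = (Xm * Xs).rank := by rw [hXm]
        _ ≤ Xm.rank := Matrix.rank_mul_le_left Xm Xs
    · rintro ⟨-, Xs, hXm, hstab⟩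
      refine ⟨Um * Xs, fun A B hAB => ?_⟩
      have : A + B * (Um * Xs) = Xp * Xs := by
        rw [hAB, Matrix.add_mul, Matrix.mul_assoc A Xm Xs, hXm, Matrix.mul_one,
          Matrix.mul_assoc]
      rw [this]
      exact hstab
  · intro K
    constructor
    · intro hK
      exact key Xm Xp Um A0 B0 h0 K hK
    · rintro ⟨Xs, hXm, hstab, rfl, hcl⟩ A B hAB
      rw [hcl A B hAB]
      exact hstab
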